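/- Let C ⊆ F_q^n be a k-dimensional F_q-linear code (1 ≤ k < n), let K be a finite field of characteristic p with q^k elements, and let D ⊆ K^m be a K-linear code that is neither {0} nor all of K^m and such that for every 1 ≤ i ≤ m there exists Λ ∈ D whose i-th coordinate equals 1. Let (f_λ)_{λ∈K} and (f'_λ)_{λ∈K} be families of functions C → F_p such that the matrices H = [ω^{f_λ(c)}]_{λ∈K,c∈C} and H' = [ω^{f'_λ(c)}]_{λ∈K,c∈C} are both BH(q^k,p) matrices (i.e., H H† = q^k I and H' H'† = q^k I). If span_ℂ{Φ_Λ : Λ ∈ D} = span_ℂ{Φ'_Λ : Λ ∈ D}, then H and H' are row-equivalent: there exist a bijection σ : K → K and b : K → F_p such that f_λ(c) = b(λ) + f'_{σ(λ)}(c) for all λ ∈ K and c ∈ C. -/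

import Mathlib

open Matrix

attribute [local instance] Classical.propDecidable

/-- `ω^a` where `ω = exp(2πi/p)` and `a : ZMod p`. -/
noncomputable def omg (p : ℕ) (a : ZMod p) : ℂ :=
  Complex.exp (2 * Real.pi * Complex.I * (a.val : ℂ) / (p : ℂ))

noncomputable def zet (p : ℕ) : ℂ := Complex.exp (2 * Real.pi * Complex.I / (p : ℂ))

section omg_lemmas
variable {p : ℕ} [hp : Fact p.Prime]

lemma zet_prim : IsPrimitiveRoot (zet p) p := Complex.isPrimitiveRoot_exp p hp.out.ne_zero

omit hp in
lemma omg_eq_pow (a : ZMod p) : omg p a = zet p ^ a.val := by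
  rw [omg, zet, ← Complex.exp_nat_mul]
  congr 1
  ring

lemma zet_pow_mod (x : ℕ) : zet p ^ (x % p) = zet p ^ x := by
  conv_rhs => rw [← Nat.mod_add_div x p]
  rw [pow_add, pow_mul, zet_prim.pow_eq_one, one_pow, mul_one]

lemma omg_add (a b : ZMod p) : omg p (a + b) = omg p a * omg p b := by
  haveI : NeZero p := ⟨hp.out.ne_zero⟩
  rw [omg_eq_pow, omg_eq_pow, omg_eq_pow, ← pow_add, ZMod.val_add, zet_pow_mod]

lemma omg_zero : omg p (0 : ZMod p) = 1 := by
  haveI : NeZero p := ⟨hp.out.ne_zero⟩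
  simp [omg_eq_pow, ZMod.val_zero]

omit hp in
lemma omg_abs (a : ZMod p) : ‖omg p a‖ = 1 := by
  have h : (2 * (Real.pi : ℂ) * Complex.I * (a.val : ℂ) / (p : ℂ))
      = ((2 * Real.pi * a.val / p : ℝ) : ℂ) * Complex.I := by
    push_cast; ring
  rw [omg, h, Complex.norm_exp_ofReal_mul_I]

omit hp in
lemma omg_mul_conj (a : ZMod p) : omg p a * (starRingEnd ℂ) (omg p a) = 1 := by
  rw [Complex.mul_conj, ← Complex.sq_norm, omg_abs]
  norm_num

omit hp in
lemma omg_ne_zero (a : ZMod p) : omg p a ≠ 0 := by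
  intro h; have := omg_abs (p := p) a; rw [h] at this; simp at this

lemma conj_omg (a : ZMod p) : (starRingEnd ℂ) (omg p a) = omg p (-a) := by
  have h1 : omg p a * omg p (-a) = 1 := by rw [← omg_add, add_neg_cancel, omg_zero]
  have h2 := omg_mul_conj a
  exact mul_left_cancel₀ (omg_ne_zero a) (h2.trans h1.symm)

lemma omg_inj {a b : ZMod p} (h : omg p a = omg p b) : a = b := by
  haveI : NeZero p := ⟨hp.out.ne_zero⟩
  rw [omg_eq_pow, omg_eq_pow] at h
  exact ZMod.val_injective p (zet_prim.pow_inj (ZMod.val_lt a) (ZMod.val_lt b) h)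

end omg_lemmas

set_option maxHeartbeats 1600000 in
/-- if two BH(q^k,p) matrices `H = [ω^{f_λ(c)}]` and `H' = [ω^{f'_λ(c)}]`
give rise to the same quantum code `Q_H(C,D) = Q_{H'}(C,D)` (for a nontrivial `D` each of
whose coordinates realizes the value 1), then `H` and `H'` are row-equivalent. -/
theorem stmt_3 (p r n k m : ℕ) [Fact p.Prime] (hr : 0 < r) (hk1 : 1 ≤ k) (hkn : k < n)
    (F K : Type) [Field F] [Fintype F] [Algebra (ZMod p) F] (hF : Fintype.card F = p ^ r)
    [Field K] [Fintype K] [Algebra (ZMod p) K] (hKcard : Fintype.card K = (p ^ r) ^ k)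
    (C : Submodule F (Fin n → F)) (hC : Module.finrank F C = k)
    (D : Submodule K (Fin m → K)) (hD0 : D ≠ ⊥) (hD1 : D ≠ ⊤)
    (hDcoord : ∀ i : Fin m, ∃ Λ ∈ D, Λ i = 1)
    (f f' : K → ↥C → ZMod p)
    (hH : ∀ lam mu : K,
      ∑ c : ↥C, omg p (f lam c) * (starRingEnd ℂ) (omg p (f mu c))
        = if lam = mu then (((p ^ r) ^ k : ℕ) : ℂ) else 0)
    (hH' : ∀ lam mu : K,
      ∑ c : ↥C, omg p (f' lam c) * (starRingEnd ℂ) (omg p (f' mu c))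
        = if lam = mu then (((p ^ r) ^ k : ℕ) : ℂ) else 0)
    (Φ Φ' : (Fin m → K) → (Fin m → Fin n → F) → ℂ)
    (hΦ : ∀ Λ x, Φ Λ x = ∏ i : Fin m,
      (if hx : x i ∈ C then (Real.sqrt ((p ^ r) ^ k))⁻¹ * omg p (f (Λ i) ⟨x i, hx⟩) else 0))
    (hΦ' : ∀ Λ x, Φ' Λ x = ∏ i : Fin m,
      (if hx : x i ∈ C then (Real.sqrt ((p ^ r) ^ k))⁻¹ * omg p (f' (Λ i) ⟨x i, hx⟩) else 0))
    (hspan : Submodule.span ℂ (Φ '' (D : Set (Fin m → K)))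
      = Submodule.span ℂ (Φ' '' (D : Set (Fin m → K)))) :
    ∃ (σ : K ≃ K) (b : K → ZMod p), ∀ (lam : K) (c : ↥C), f lam c = b lam + f' (σ lam) c := by
  have hp : p.Prime := Fact.out
  set N : ℕ := (p ^ r) ^ k with hNdef
  have hNpos : 0 < N := pow_pos (pow_pos hp.pos r) k
  have hNc : ((N : ℕ) : ℂ) ≠ 0 := by exact_mod_cast hNpos.ne'
  have hcardC : Fintype.card ↥C = N := by
    rw [Module.card_eq_pow_finrank (K := F) (V := ↥C), hF, hC]
  have e : ↥C ≃ K := Fintype.equivOfCardEq (hcardC.trans hKcard.symm)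
  -- matrices
  set A : Matrix K ↥C ℂ := Matrix.of (fun lam c => omg p (f lam c)) with hA
  set A' : Matrix K ↥C ℂ := Matrix.of (fun lam c => omg p (f' lam c)) with hA'
  have hAA : A * Aᴴ = (N : ℂ) • 1 := by
    ext lam mu
    simp only [mul_apply, conjTranspose_apply, Matrix.smul_apply, Matrix.one_apply,
      smul_eq_mul, of_apply, hA]
    rw [show (∑ c : ↥C, omg p (f lam c) * star (omg p (f mu c)))
        = ∑ c : ↥C, omg p (f lam c) * (starRingEnd ℂ) (omg p (f mu c)) from rfl, hH lam mu]
    by_cases h : lam = mu <;> simp [h]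
  have hA'A' : A' * A'ᴴ = (N : ℂ) • 1 := by
    ext lam mu
    simp only [mul_apply, conjTranspose_apply, Matrix.smul_apply, Matrix.one_apply,
      smul_eq_mul, of_apply, hA']
    rw [show (∑ c : ↥C, omg p (f' lam c) * star (omg p (f' mu c)))
        = ∑ c : ↥C, omg p (f' lam c) * (starRingEnd ℂ) (omg p (f' mu c)) from rfl, hH' lam mu]
    by_cases h : lam = mu <;> simp [h]
  -- column orthogonality of A'
  have hA'col : A'ᴴ * A' = (N : ℂ) • 1 := by
    set B : Matrix K K ℂ := A'.submatrix id ⇑e.symm with hB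
    have hBB : B * Bᴴ = (N : ℂ) • 1 := by
      rw [hB, conjTranspose_submatrix, submatrix_mul_equiv A' A'ᴴ id e.symm id, hA'A']
      rfl
    have h1 : B * ((N : ℂ)⁻¹ • Bᴴ) = 1 := by
      rw [Matrix.mul_smul, hBB, smul_smul, inv_mul_cancel₀ hNc, one_smul]
    have h2 : ((N : ℂ)⁻¹ • Bᴴ) * B = 1 := mul_eq_one_comm.mp h1
    have h3 : Bᴴ * B = (N : ℂ) • 1 := by
      have := congrArg (fun M => (N : ℂ) • M) h2
      simpa [Matrix.smul_mul, smul_smul, mul_inv_cancel₀ hNc] using this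
    have h4 : (A'ᴴ * A').submatrix (⇑e.symm) (⇑e.symm) = (N : ℂ) • 1 := by
      rw [Matrix.submatrix_mul A'ᴴ A' (⇑e.symm) id (⇑e.symm) Function.bijective_id, ← h3, hB,
        conjTranspose_submatrix]
    ext c c'
    have := congrFun (congrFun h4 (e c)) (e c')
    simp only [submatrix_apply, Equiv.symm_apply_apply] at this
    rw [this]
    simp only [Matrix.smul_apply, Matrix.one_apply, smul_eq_mul]
    by_cases h : c = c'
    · simp [h]
    · have : e c ≠ e c' := fun hc => h (e.injective hc)
      simp [h, this]
  -- the transition matrix U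
  set U : Matrix K K ℂ := (N : ℂ)⁻¹ • (A * A'ᴴ) with hU
  have hUapply : ∀ lam mu, U lam mu
      = (N : ℂ)⁻¹ * ∑ c : ↥C, omg p (f lam c) * (starRingEnd ℂ) (omg p (f' mu c)) := by
    intro lam mu
    simp only [hU, Matrix.smul_apply, mul_apply, conjTranspose_apply, smul_eq_mul, of_apply,
      hA, hA']
    rfl
  have hUapply' : ∀ lam mu, (N : ℂ) * U lam mu
      = ∑ c : ↥C, omg p (f lam c) * (starRingEnd ℂ) (omg p (f' mu c)) := by
    intro lam mu
    rw [hUapply, ← mul_assoc, mul_inv_cancel₀ hNc, one_mul]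
  have hUU : U * Uᴴ = 1 := by
    have hUH : Uᴴ = (N : ℂ)⁻¹ • (A' * Aᴴ) := by
      rw [hU, conjTranspose_smul, conjTranspose_mul, conjTranspose_conjTranspose]
      congr 1
      simp [starRingEnd_apply, star_inv₀]
    rw [hUH, hU, Matrix.smul_mul, Matrix.mul_smul, smul_smul, Matrix.mul_assoc,
      ← Matrix.mul_assoc A'ᴴ A' Aᴴ, hA'col, Matrix.smul_mul, Matrix.one_mul,
      Matrix.mul_smul, hAA, smul_smul, smul_smul]
    rw [show ((N:ℂ)⁻¹ * (N:ℂ)⁻¹ * (N:ℂ) * (N:ℂ)) = ((N:ℂ)⁻¹ * (N:ℂ)) * ((N:ℂ)⁻¹ * (N:ℂ)) by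
      ring, inv_mul_cancel₀ hNc, one_mul, one_smul]
  have hUrow : ∀ lam lam', ∑ mu : K, U lam mu * (starRingEnd ℂ) (U lam' mu)
      = if lam = lam' then 1 else 0 := by
    intro lam lam'
    have h := congrFun (congrFun hUU lam) lam'
    simp only [mul_apply, conjTranspose_apply, Matrix.one_apply] at h
    rw [show (∑ mu : K, U lam mu * star (U lam' mu))
        = ∑ mu : K, U lam mu * (starRingEnd ℂ) (U lam' mu) from rfl] at h
    rw [h]
  -- square root bookkeeping
  have hx : ((p:ℝ)^r)^k = (N:ℝ) := by rw [hNdef]; push_cast; ring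
  have hsqrt : (((Real.sqrt (((p:ℝ)^r)^k))⁻¹ : ℝ) : ℂ)
      * (starRingEnd ℂ) (((Real.sqrt (((p:ℝ)^r)^k))⁻¹ : ℝ) : ℂ) = ((N : ℕ) : ℂ)⁻¹ := by
    rw [Complex.conj_ofReal, ← Complex.ofReal_mul, ← mul_inv,
      Real.mul_self_sqrt (by positivity), hx]
    push_cast
    ring
  -- summing over the subtype
  have hsum_sub : ∀ (G : ↥C → ℂ),
      (∑ v : Fin n → F, if hv : v ∈ C then G ⟨v, hv⟩ else 0) = ∑ c : ↥C, G c := by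
    intro G
    rw [← Finset.sum_filter_of_ne (p := fun v => v ∈ C)
      (fun v _ hv => by by_contra hc; rw [dif_neg hc] at hv; exact hv rfl)]
    rw [Finset.sum_subtype (p := fun v => v ∈ C) _ (by simp)]
    exact Finset.sum_congr rfl fun c _ => by rw [dif_pos c.2]
  -- the key overlap computation
  have hkey : ∀ (g g' : K → ↥C → ZMod p) (Λ Μ : Fin m → K),
      (∑ x : Fin m → Fin n → F,
        (∏ i : Fin m, if hxx : x i ∈ C then
            (((Real.sqrt (((p:ℝ)^r)^k))⁻¹ : ℝ) : ℂ) * omg p (g (Λ i) ⟨x i, hxx⟩) else 0)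
        * (starRingEnd ℂ) (∏ i : Fin m, if hxx : x i ∈ C then
            (((Real.sqrt (((p:ℝ)^r)^k))⁻¹ : ℝ) : ℂ) * omg p (g' (Μ i) ⟨x i, hxx⟩) else 0))
      = ∏ i : Fin m, ((N : ℂ)⁻¹
          * ∑ c : ↥C, omg p (g (Λ i) c) * (starRingEnd ℂ) (omg p (g' (Μ i) c))) := by
    intro g g' Λ Μ
    have hterm : ∀ x : Fin m → Fin n → F,
        (∏ i : Fin m, if hxx : x i ∈ C then
            (((Real.sqrt (((p:ℝ)^r)^k))⁻¹ : ℝ) : ℂ) * omg p (g (Λ i) ⟨x i, hxx⟩) else 0)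
        * (starRingEnd ℂ) (∏ i : Fin m, if hxx : x i ∈ C then
            (((Real.sqrt (((p:ℝ)^r)^k))⁻¹ : ℝ) : ℂ) * omg p (g' (Μ i) ⟨x i, hxx⟩) else 0)
        = ∏ i : Fin m, (if hxx : x i ∈ C then
            (N : ℂ)⁻¹ * (omg p (g (Λ i) ⟨x i, hxx⟩)
              * (starRingEnd ℂ) (omg p (g' (Μ i) ⟨x i, hxx⟩))) else 0) := by
      intro x
      rw [map_prod, ← Finset.prod_mul_distrib]
      refine Finset.prod_congr rfl fun i _ => ?_
      by_cases hxx : x i ∈ C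
      · rw [dif_pos hxx, dif_pos hxx, dif_pos hxx, _root_.map_mul]
        rw [show ((((Real.sqrt (((p:ℝ)^r)^k))⁻¹ : ℝ) : ℂ) * omg p (g (Λ i) ⟨x i, hxx⟩))
            * ((starRingEnd ℂ) ((((Real.sqrt (((p:ℝ)^r)^k))⁻¹ : ℝ) : ℂ))
              * (starRingEnd ℂ) (omg p (g' (Μ i) ⟨x i, hxx⟩)))
            = ((((Real.sqrt (((p:ℝ)^r)^k))⁻¹ : ℝ) : ℂ)
                * (starRingEnd ℂ) ((((Real.sqrt (((p:ℝ)^r)^k))⁻¹ : ℝ) : ℂ)))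
              * (omg p (g (Λ i) ⟨x i, hxx⟩)
                * (starRingEnd ℂ) (omg p (g' (Μ i) ⟨x i, hxx⟩))) from by ring, hsqrt]
      · rw [dif_neg hxx, dif_neg hxx, dif_neg hxx, map_zero, mul_zero]
    calc (∑ x : Fin m → Fin n → F,
        (∏ i : Fin m, if hxx : x i ∈ C then
            (((Real.sqrt (((p:ℝ)^r)^k))⁻¹ : ℝ) : ℂ) * omg p (g (Λ i) ⟨x i, hxx⟩) else 0)
        * (starRingEnd ℂ) (∏ i : Fin m, if hxx : x i ∈ C then
            (((Real.sqrt (((p:ℝ)^r)^k))⁻¹ : ℝ) : ℂ) * omg p (g' (Μ i) ⟨x i, hxx⟩) else 0))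
        = ∑ x : Fin m → Fin n → F, ∏ i : Fin m, (if hxx : x i ∈ C then
            (N : ℂ)⁻¹ * (omg p (g (Λ i) ⟨x i, hxx⟩)
              * (starRingEnd ℂ) (omg p (g' (Μ i) ⟨x i, hxx⟩))) else 0) :=
          Finset.sum_congr rfl fun x _ => hterm x
      _ = ∏ i : Fin m, ∑ v : Fin n → F, (if hv : v ∈ C then
            (N : ℂ)⁻¹ * (omg p (g (Λ i) ⟨v, hv⟩)
              * (starRingEnd ℂ) (omg p (g' (Μ i) ⟨v, hv⟩))) else 0) :=
          (Fintype.prod_sum (fun (i : Fin m) (v : Fin n → F) =>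
            if hv : v ∈ C then (N : ℂ)⁻¹ * (omg p (g (Λ i) ⟨v, hv⟩)
              * (starRingEnd ℂ) (omg p (g' (Μ i) ⟨v, hv⟩))) else 0)).symm
      _ = ∏ i : Fin m, ((N : ℂ)⁻¹
          * ∑ c : ↥C, omg p (g (Λ i) c) * (starRingEnd ℂ) (omg p (g' (Μ i) c))) := by
          refine Finset.prod_congr rfl fun i _ => ?_
          rw [hsum_sub (fun c => (N : ℂ)⁻¹ * (omg p (g (Λ i) c)
            * (starRingEnd ℂ) (omg p (g' (Μ i) c)))), ← Finset.mul_sum]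
  -- orthonormality of the Φ' states
  have hipP'P' : ∀ Mu Nu : Fin m → K,
      (∑ x : Fin m → Fin n → F, Φ' Mu x * (starRingEnd ℂ) (Φ' Nu x))
        = if Mu = Nu then 1 else 0 := by
    intro Mu Nu
    simp_rw [hΦ']
    rw [hkey f' f' Mu Nu]
    by_cases h : Mu = Nu
    · subst h
      rw [if_pos rfl, Finset.prod_eq_one]
      intro i _
      rw [hH' (Mu i) (Mu i), if_pos rfl, inv_mul_cancel₀ hNc]
    · rw [if_neg h]
      obtain ⟨i, hi⟩ : ∃ i, Mu i ≠ Nu i := by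
        by_contra hc; push_neg at hc; exact h (funext hc)
      refine Finset.prod_eq_zero (Finset.mem_univ i) ?_
      rw [hH' (Mu i) (Nu i), if_neg hi, mul_zero]
  -- overlaps of Φ with Φ'
  have hipPP' : ∀ Lam Mu : Fin m → K,
      (∑ x : Fin m → Fin n → F, Φ Lam x * (starRingEnd ℂ) (Φ' Mu x))
        = ∏ i : Fin m, U (Lam i) (Mu i) := by
    intro Lam Mu
    simp_rw [hΦ, hΦ']
    rw [hkey f f' Lam Mu]
    exact Finset.prod_congr rfl fun i _ => (hUapply (Lam i) (Mu i)).symm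
  -- vanishing of overlaps outside D
  have hprod0 : ∀ Lam ∈ D, ∀ Mu : Fin m → K, Mu ∉ D → ∏ i : Fin m, U (Lam i) (Mu i) = 0 := by
    intro Lam hLam Mu hMu
    rw [← hipPP']
    have hmem : Φ Lam ∈ Submodule.span ℂ (Φ' '' (D : Set (Fin m → K))) := by
      rw [← hspan]; exact Submodule.subset_span ⟨Lam, hLam, rfl⟩
    have horth : ∀ v ∈ Submodule.span ℂ (Φ' '' (D : Set (Fin m → K))),
        (∑ x : Fin m → Fin n → F, v x * (starRingEnd ℂ) (Φ' Mu x)) = 0 := by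
      intro v hv
      induction hv using Submodule.span_induction with
      | mem w hw =>
          obtain ⟨Nu, hNu, rfl⟩ := hw
          rw [hipP'P']
          exact if_neg (fun hc : Nu = Mu => hMu (hc ▸ hNu))
      | zero => simp
      | add a b _ _ ha hb => simp only [Pi.add_apply, add_mul, Finset.sum_add_distrib, ha, hb,
          add_zero]
      | smul t a _ ha => simp only [Pi.smul_apply, smul_eq_mul, mul_assoc, ← Finset.mul_sum, ha,
          mul_zero]
    exact horth _ hmem
  -- every row of U is nonzero
  have hrow_ne : ∀ lam : K, ∃ mu : K, U lam mu ≠ 0 := by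
    intro lam
    by_contra hc
    push_neg at hc
    have h1 := hUrow lam lam
    rw [if_pos rfl] at h1
    simp only [hc, zero_mul, Finset.sum_const_zero] at h1
    exact zero_ne_one h1
  -- every row of U has at most one nonzero entry
  have huniq : ∀ (lam mu mu' : K), U lam mu ≠ 0 → U lam mu' ≠ 0 → mu = mu' := by
    intro lam mu mu' h1 h2
    by_contra hne
    apply hD1
    have hsingle : ∀ i : Fin m, (Pi.single i (1 : K) : Fin m → K) ∈ D := by
      intro i
      obtain ⟨Lam', hLam'D, hLam'i⟩ := hDcoord i
      have hLamD : lam • Lam' ∈ D := D.smul_mem lam hLam'D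
      choose ν hν using fun j : Fin m => hrow_ne ((lam • Lam') j)
      have hmem : ∀ w : K, U lam w ≠ 0 → Function.update ν i w ∈ D := by
        intro w hw
        by_contra hnot
        obtain ⟨j, _, hj⟩ := Finset.prod_eq_zero_iff.mp (hprod0 _ hLamD _ hnot)
        by_cases hji : j = i
        · subst hji
          rw [Function.update_self] at hj
          have : (lam • Lam') j = lam := by
            rw [Pi.smul_apply, hLam'i, smul_eq_mul, mul_one]
          rw [this] at hj
          exact hw hj
        · rw [Function.update_of_ne hji] at hj
          exact hν j hj
      have hsub : Function.update ν i mu - Function.update ν i mu' ∈ D :=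
        D.sub_mem (hmem mu h1) (hmem mu' h2)
      have heq : Function.update ν i mu - Function.update ν i mu'
          = Pi.single i (mu - mu') := by
        funext j
        by_cases hji : j = i
        · subst hji
          simp [Function.update_self, Pi.single_eq_same]
        · simp [Function.update_of_ne hji, Pi.single_eq_of_ne hji, sub_self]
      rw [heq] at hsub
      have hone : (mu - mu')⁻¹ • (Pi.single i (mu - mu') : Fin m → K)
          = Pi.single i (1 : K) := by
        rw [← Pi.single_smul, smul_eq_mul, inv_mul_cancel₀ (sub_ne_zero.mpr hne)]
      rw [← hone]
      exact D.smul_mem _ hsub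
    rw [Submodule.eq_top_iff']
    intro v
    have hv : v = ∑ i : Fin m, v i • (Pi.single i (1 : K) : Fin m → K) := by
      conv_lhs => rw [pi_eq_sum_univ v]
      refine Finset.sum_congr rfl fun i _ => ?_
      congr 1
      funext j
      simp [Pi.single_apply, eq_comm]
    rw [hv]
    exact Submodule.sum_mem D fun i _ => D.smul_mem _ (hsingle i)
  -- the permutation
  choose σ0 hσ0 using hrow_ne
  have hzero : ∀ lam mu, mu ≠ σ0 lam → U lam mu = 0 := by
    intro lam mu h
    by_contra h'
    exact h (huniq lam mu (σ0 lam) h' (hσ0 lam))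
  have hconj_ne : ∀ z : ℂ, z ≠ 0 → (starRingEnd ℂ) z ≠ 0 := by
    intro z hz hc
    apply hz
    simpa using congrArg (starRingEnd ℂ) hc
  have hinj : Function.Injective σ0 := by
    intro a b hab
    by_contra hne
    have h0 := hUrow a b
    rw [if_neg hne] at h0
    rw [Finset.sum_eq_single (σ0 a)
      (fun mu _ hmu => by rw [hzero a mu hmu, zero_mul])
      (fun h => absurd (Finset.mem_univ _) h)] at h0
    have hb' : U b (σ0 a) ≠ 0 := by rw [hab]; exact hσ0 b
    exact mul_ne_zero (hσ0 a) (hconj_ne _ hb') h0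
  -- row normalization
  have hnorm : ∀ lam, U lam (σ0 lam) * (starRingEnd ℂ) (U lam (σ0 lam)) = 1 := by
    intro lam
    have h1 := hUrow lam lam
    rw [if_pos rfl, Finset.sum_eq_single (σ0 lam)
      (fun mu _ hmu => by rw [hzero lam mu hmu, zero_mul])
      (fun h => absurd (Finset.mem_univ _) h)] at h1
    exact h1
  -- constancy of the phase
  have hconst : ∀ lam, ∀ c c' : ↥C,
      omg p (f lam c) * (starRingEnd ℂ) (omg p (f' (σ0 lam) c))
        = omg p (f lam c') * (starRingEnd ℂ) (omg p (f' (σ0 lam) c')) := by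
    intro lam c c'
    set t : ↥C → ℂ := fun c => omg p (f lam c) * (starRingEnd ℂ) (omg p (f' (σ0 lam) c))
      with ht
    have habs : ∀ c : ↥C, ‖t c‖ = 1 := by
      intro c
      rw [ht]
      simp only [norm_mul, Complex.norm_conj, omg_abs, mul_one]
    have hSS : (∑ c : ↥C, t c) * (starRingEnd ℂ) (∑ c : ↥C, t c) = (N : ℂ) * N := by
      have h := hnorm lam
      calc (∑ c : ↥C, t c) * (starRingEnd ℂ) (∑ c : ↥C, t c)
          = ((N : ℂ) * U lam (σ0 lam)) * (starRingEnd ℂ) ((N : ℂ) * U lam (σ0 lam)) := by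
            rw [hUapply' lam (σ0 lam)]
        _ = ((N : ℂ) * N) * (U lam (σ0 lam) * (starRingEnd ℂ) (U lam (σ0 lam))) := by
            rw [_root_.map_mul, map_natCast]; ring
        _ = (N : ℂ) * N := by rw [h, mul_one]
    have hexp : ∑ c0 : ↥C, ∑ c0' : ↥C, t c0 * (starRingEnd ℂ) (t c0') = (N : ℂ) * N := by
      rw [← hSS, map_sum, Finset.sum_mul_sum]
    have hre : ∑ c0 : ↥C, ∑ c0' : ↥C, (t c0 * (starRingEnd ℂ) (t c0')).re = (N : ℝ) * N := by
      have := congrArg Complex.re hexp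
      simpa [Complex.re_sum] using this
    have hle : ∀ c0 c0' : ↥C, (t c0 * (starRingEnd ℂ) (t c0')).re ≤ 1 := by
      intro c0 c0'
      refine le_trans (Complex.re_le_norm _) ?_
      rw [norm_mul, Complex.norm_conj, habs, habs, mul_one]
    have hall : ∀ c0 c0' : ↥C, (t c0 * (starRingEnd ℂ) (t c0')).re = 1 := by
      by_contra hcon
      push_neg at hcon
      obtain ⟨c0, c0', hc0⟩ := hcon
      have hlt : ∑ z : ↥C × ↥C, (t z.1 * (starRingEnd ℂ) (t z.2)).re
          < ∑ _z : ↥C × ↥C, (1 : ℝ) := by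
        refine Finset.sum_lt_sum (fun z _ => hle z.1 z.2) ⟨(c0, c0'), Finset.mem_univ _, ?_⟩
        exact lt_of_le_of_ne (hle c0 c0') hc0
      have hre' : ∑ z : ↥C × ↥C, (t z.1 * (starRingEnd ℂ) (t z.2)).re = (N : ℝ) * N := by
        rw [Fintype.sum_prod_type]
        exact hre
      rw [hre'] at hlt
      simp only [Finset.sum_const, Finset.card_univ, Fintype.card_prod, hcardC, nsmul_eq_mul,
        mul_one] at hlt
      rw [Nat.cast_mul] at hlt
      exact lt_irrefl _ hlt
    have h1 : t c * (starRingEnd ℂ) (t c') = 1 := by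
      have ha : ‖t c * (starRingEnd ℂ) (t c')‖ = 1 := by
        rw [norm_mul, Complex.norm_conj, habs, habs, mul_one]
      have hr := hall c c'
      have hnsq := Complex.sq_norm (t c * (starRingEnd ℂ) (t c'))
      rw [ha] at hnsq
      rw [Complex.normSq_apply, hr] at hnsq
      have him : (t c * (starRingEnd ℂ) (t c')).im = 0 := by nlinarith
      exact Complex.ext (by rw [hr, Complex.one_re]) (by rw [him, Complex.one_im])
    have hc' : (starRingEnd ℂ) (t c') * t c' = 1 := by
      rw [mul_comm, Complex.mul_conj, ← Complex.sq_norm, habs]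
      norm_num
    calc t c = t c * ((starRingEnd ℂ) (t c') * t c') := by rw [hc', mul_one]
      _ = (t c * (starRingEnd ℂ) (t c')) * t c' := by ring
      _ = t c' := by rw [h1, one_mul]
  -- conclusion
  refine ⟨Equiv.ofBijective σ0 (Finite.injective_iff_bijective.mp hinj),
    fun lam => f lam 0 - f' (σ0 lam) 0, ?_⟩
  intro lam c
  have h := hconst lam c 0
  rw [conj_omg, conj_omg, ← omg_add, ← omg_add] at h
  have heq := omg_inj h
  have : σ0 lam = (Equiv.ofBijective σ0 (Finite.injective_iff_bijective.mp hinj)) lam := rfl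
  rw [← this]
  linear_combination heq
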